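/- Fix N ≥ 3, let H_C be the MCS charger Hamiltonian on N+1 qubits, and let φ be the product state |+z⟩₀ ⊗ |+x⟩^{⊗N}, i.e. the unit vector φ f = if f 0 = 0 then (2:ℂ)^(-(N:ℝ)/2) else 0. Then star φ ⬝ᵥ (H_C.mulVec φ) = 0 and star φ ⬝ᵥ ((H_C * H_C).mulVec φ) = N^2 + N, so the energy variance of H_C in the state φ equals N² + N and scales quadratically with system size. -/

import Mathlib

open scoped Matrix.Norms.L2Operator
open scoped Matrix

/-- The 2×2 matrix `P` acting on site `j` of a chain of `N+1` qubits
(identity elsewhere): `P⁽ʲ⁾ f g = P (f j) (g j) * ∏_{k ≠ j} δ_{f k, g k}`. -/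
def siteOp {N : ℕ} (P : Matrix (Fin 2) (Fin 2) ℂ) (j : Fin (N + 1)) :
    Matrix (Fin (N + 1) → Fin 2) (Fin (N + 1) → Fin 2) ℂ :=
  fun f g => P (f j) (g j) * ∏ k ∈ Finset.univ.erase j, (if f k = g k then (1 : ℂ) else 0)

/-- Pauli X. -/
def σx : Matrix (Fin 2) (Fin 2) ℂ := !![0, 1; 1, 0]
/-- Pauli Y. -/
def σy : Matrix (Fin 2) (Fin 2) ℂ := !![0, -Complex.I; Complex.I, 0]
/-- Pauli Z. -/
def σz : Matrix (Fin 2) (Fin 2) ℂ := !![1, 0; 0, -1]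

/-- The peripheral site labelled `i+1` (site `0` is the central spin). -/
def per {N : ℕ} (i : Fin N) : Fin (N + 1) := i.succ

/-- The cyclic successor `i ⊕ 1` among the peripheral sites `{1, …, N}`. -/
def perS {N : ℕ} (i : Fin N) : Fin (N + 1) :=
  ⟨(i.1 + 1) % N + 1, Nat.succ_lt_succ (Nat.mod_lt _ i.pos)⟩
/-- The cyclic predecessor `i ⊖ 1` among the peripheral sites `{1, …, N}`. -/
def perP {N : ℕ} (i : Fin N) : Fin (N + 1) :=
  ⟨(i.1 + (N - 1)) % N + 1, Nat.succ_lt_succ (Nat.mod_lt _ i.pos)⟩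

/-- The modified central-spin (MCS) battery Hamiltonian
`H_B = ∑_{i=1}^N σx⁽⁰⁾ σx⁽ⁱ⁾ + ∑_{i=1}^N σz⁽ⁱ⁾ σz⁽ⁱ⊕¹⁾` on `N+1` qubits (PBC). -/
noncomputable def HB (N : ℕ) :
    Matrix (Fin (N + 1) → Fin 2) (Fin (N + 1) → Fin 2) ℂ :=
  (∑ i : Fin N, siteOp σx 0 * siteOp σx (per i)) +
  (∑ i : Fin N, siteOp σz (per i) * siteOp σz (perS i))

/-- The modified central-spin (MCS) charger Hamiltonian
`H_C = ∑_{i=1}^N σy⁽⁰⁾ σx⁽ⁱ⁾ + ∑_{i=1}^N σz⁽ⁱ⁾ σz⁽ⁱ⊕¹⁾` on `N+1` qubits (PBC). -/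
noncomputable def HC (N : ℕ) :
    Matrix (Fin (N + 1) → Fin 2) (Fin (N + 1) → Fin 2) ℂ :=
  (∑ i : Fin N, siteOp σy 0 * siteOp σx (per i)) +
  (∑ i : Fin N, siteOp σz (per i) * siteOp σz (perS i))

/-- The product state `|+z⟩₀ ⊗ |+x⟩^{⊗N}`: the unit vector
`φ f = if f 0 = 0 then 2^{-N/2} else 0`. -/
noncomputable def φprod (N : ℕ) : (Fin (N + 1) → Fin 2) → ℂ :=
  fun f => if f 0 = 0 then (((2 : ℝ) ^ (-(N : ℝ) / 2) : ℝ) : ℂ) else 0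

/-! ### Auxiliary framework -/

/-- Single-site factors of the product state. -/
noncomputable def wv (N : ℕ) (k : Fin (N + 1)) : Fin 2 → ℂ :=
  if k = 0 then ![1, 0] else ![(((2:ℝ) ^ (-(1:ℝ)/2) : ℝ) : ℂ), (((2:ℝ) ^ (-(1:ℝ)/2) : ℝ) : ℂ)]

/-- Tensor product of single-site operators. -/
def prodOp {N : ℕ} (M : Fin (N + 1) → Matrix (Fin 2) (Fin 2) ℂ) :
    Matrix (Fin (N + 1) → Fin 2) (Fin (N + 1) → Fin 2) ℂ :=
  Matrix.of fun f g => ∏ k, M k (f k) (g k)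

/-- Single-site expectation value. -/
noncomputable def ew (N : ℕ) (k : Fin (N + 1)) (M : Matrix (Fin 2) (Fin 2) ℂ) : ℂ :=
  star (wv N k) ⬝ᵥ M.mulVec (wv N k)

lemma siteOp_eq {N : ℕ} (P : Matrix (Fin 2) (Fin 2) ℂ) (j : Fin (N + 1)) :
    siteOp P j = prodOp (fun k => if k = j then P else 1) := by
  ext f g
  simp only [siteOp, prodOp, Matrix.of_apply]
  rw [← Finset.mul_prod_erase (Finset.univ) _ (Finset.mem_univ j)]
  simp only [if_pos rfl]
  congr 1
  apply Finset.prod_congr rfl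
  intro k hk
  rw [if_neg (Finset.ne_of_mem_erase hk)]
  simp [Matrix.one_apply]

lemma prodOp_mul {N : ℕ} (M M' : Fin (N + 1) → Matrix (Fin 2) (Fin 2) ℂ) :
    prodOp M * prodOp M' = prodOp (fun k => M k * M' k) := by
  ext f h
  simp only [Matrix.mul_apply, prodOp, Matrix.of_apply]
  rw [Finset.prod_univ_sum]
  rw [Fintype.piFinset_univ]
  simp [Finset.prod_mul_distrib]

lemma φprod_eq {N : ℕ} (f : Fin (N + 1) → Fin 2) :
    φprod N f = ∏ k, wv N k (f k) := by
  rw [← Finset.mul_prod_erase (Finset.univ) _ (Finset.mem_univ 0)]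
  have h1 : ∏ k ∈ Finset.univ.erase (0 : Fin (N+1)), wv N k (f k)
      = ((((2:ℝ) ^ (-(1:ℝ)/2) : ℝ) : ℂ)) ^ N := by
    rw [Finset.prod_congr rfl (fun k hk => ?_), Finset.prod_const]
    · congr 1
      simp [Finset.card_erase_of_mem]
    · show wv N k (f k) = _
      rw [wv, if_neg (Finset.ne_of_mem_erase hk)]
      match h2 : f k with
      | 0 => simp
      | 1 => simp
  rw [h1]
  have h2 : ((((2:ℝ) ^ (-(1:ℝ)/2) : ℝ) : ℂ)) ^ N = (((2:ℝ) ^ (-(N:ℝ)/2) : ℝ) : ℂ) := by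
    rw [← Complex.ofReal_pow]
    congr 1
    rw [← Real.rpow_natCast ((2:ℝ) ^ (-(1:ℝ)/2)) N, ← Real.rpow_mul (by norm_num)]
    ring_nf
  rw [h2, φprod, wv, if_pos rfl]
  match h0 : f 0 with
  | 0 => simp
  | 1 => simp

lemma expect_prodOp {N : ℕ} (M : Fin (N + 1) → Matrix (Fin 2) (Fin 2) ℂ) :
    star (φprod N) ⬝ᵥ (prodOp M).mulVec (φprod N) = ∏ k, ew N k (M k) := by
  have key : ∀ k, ew N k (M k) = ∑ a : Fin 2, ∑ b : Fin 2,
      (starRingEnd ℂ) (wv N k a) * M k a b * wv N k b := by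
    intro k
    simp [ew, dotProduct, Matrix.mulVec, Fin.sum_univ_two, Complex.star_def]
    ring
  simp only [key]
  rw [show (∏ k, ∑ a : Fin 2, ∑ b : Fin 2,
      (starRingEnd ℂ) (wv N k a) * M k a b * wv N k b)
    = ∑ f : Fin (N+1) → Fin 2, ∏ k, ∑ b : Fin 2,
      (starRingEnd ℂ) (wv N k (f k)) * M k (f k) b * wv N k b from by
      rw [Finset.prod_univ_sum]; rw [Fintype.piFinset_univ]]
  simp_rw [Finset.prod_univ_sum, Fintype.piFinset_univ]
  simp only [dotProduct, Matrix.mulVec, Pi.star_apply, φprod_eq, prodOp, Matrix.of_apply,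
    Complex.star_def, map_prod, Finset.mul_sum, Finset.sum_mul, ← Finset.prod_mul_distrib]
  simp_rw [mul_assoc]

lemma dot_sum {N : ℕ} {ι : Type*} [DecidableEq ι] (s : Finset ι)
    (M : ι → Matrix (Fin (N + 1) → Fin 2) (Fin (N + 1) → Fin 2) ℂ) :
    star (φprod N) ⬝ᵥ (∑ i ∈ s, M i).mulVec (φprod N)
      = ∑ i ∈ s, star (φprod N) ⬝ᵥ (M i).mulVec (φprod N) := by
  induction s using Finset.induction with
  | empty => simp
  | insert a s h ih => simp [Finset.sum_insert h, Matrix.add_mulVec, dotProduct_add, ih]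

/-! ### Single-site expectation values -/

lemma ew_zero {N : ℕ} (M : Matrix (Fin 2) (Fin 2) ℂ) : ew N 0 M = M 0 0 := by
  simp [ew, wv, dotProduct, Matrix.mulVec, Fin.sum_univ_two]

lemma c_mul_c : (((2:ℝ) ^ (-(1:ℝ)/2) : ℝ) : ℂ) * (((2:ℝ) ^ (-(1:ℝ)/2) : ℝ) : ℂ) = 1/2 := by
  rw [← Complex.ofReal_mul, ← Real.rpow_add (by norm_num)]
  norm_num

lemma ew_ne {N : ℕ} {k : Fin (N + 1)} (hk : k ≠ 0) (M : Matrix (Fin 2) (Fin 2) ℂ) :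
    ew N k M = (M 0 0 + M 0 1 + M 1 0 + M 1 1) / 2 := by
  simp only [ew, wv, if_neg hk, dotProduct, Matrix.mulVec, Fin.sum_univ_two, Pi.star_apply]
  simp only [Matrix.cons_val_zero, Matrix.cons_val_one, Matrix.head_cons, Complex.star_def,
    Complex.conj_ofReal]
  have h := c_mul_c
  set c := (((2:ℝ) ^ (-(1:ℝ)/2) : ℝ) : ℂ)
  linear_combination (M 0 0 + M 0 1 + M 1 0 + M 1 1) * h

lemma ew_one {N : ℕ} (k : Fin (N + 1)) : ew N k 1 = 1 := by
  by_cases hk : k = 0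
  · subst hk; rw [ew_zero]; simp
  · rw [ew_ne hk]; simp [Matrix.one_apply]

lemma sx_mul_sx : σx * σx = 1 := by
  ext i j; fin_cases i <;> fin_cases j <;>
    simp [σx, Matrix.mul_apply, Fin.sum_univ_two, Matrix.one_apply]
lemma sy_mul_sy : σy * σy = 1 := by
  ext i j; fin_cases i <;> fin_cases j <;>
    simp [σy, Matrix.mul_apply, Fin.sum_univ_two, Matrix.one_apply, Complex.I_mul_I]
lemma sz_mul_sz : σz * σz = 1 := by
  ext i j; fin_cases i <;> fin_cases j <;>
    simp [σz, Matrix.mul_apply, Fin.sum_univ_two, Matrix.one_apply]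

lemma ew_sx {N : ℕ} {k : Fin (N + 1)} (hk : k ≠ 0) : ew N k σx = 1 := by
  rw [ew_ne hk]; simp [σx]
lemma ew_sz {N : ℕ} {k : Fin (N + 1)} (hk : k ≠ 0) : ew N k σz = 0 := by
  rw [ew_ne hk]; simp [σz]
lemma ew_sy0 {N : ℕ} : ew N 0 σy = 0 := by
  rw [ew_zero]; simp [σy]

/-! ### Fin arithmetic -/

lemma per_ne_zero {N : ℕ} (i : Fin N) : per i ≠ 0 := Fin.succ_ne_zero i
lemma perS_ne_zero {N : ℕ} (i : Fin N) : perS i ≠ 0 := by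
  simp [perS, Fin.ext_iff]
lemma per_injective {N : ℕ} {i j : Fin N} (h : per i = per j) : i = j := by
  simpa [per, Fin.ext_iff] using Fin.ext_iff.mp h

lemma mod_succ_eq {a N : ℕ} (h : a < N) : (a + 1) % N = if a + 1 = N then 0 else a + 1 := by
  rcases Nat.lt_or_ge (a + 1) N with h' | h'
  · rw [Nat.mod_eq_of_lt h', if_neg (by omega)]
  · have hE : a + 1 = N := by omega
    rw [hE, Nat.mod_self, if_pos rfl]

lemma per_ne_perS {N : ℕ} (hN : 3 ≤ N) (i : Fin N) : per i ≠ perS i := by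
  have hi := i.isLt
  simp only [per, perS, Fin.ne_iff_vne, Fin.val_succ]
  rw [mod_succ_eq hi]
  split_ifs <;> omega

lemma no_two_cycle {N : ℕ} (hN : 3 ≤ N) {i j : Fin N} (hij : i ≠ j)
    (h1 : per i = perS j) (h2 : per j = perS i) : False := by
  have hi := i.isLt
  have hj := j.isLt
  have e1 : i.1 + 1 = (j.1 + 1) % N + 1 := Fin.ext_iff.mp h1
  have e2 : j.1 + 1 = (i.1 + 1) % N + 1 := Fin.ext_iff.mp h2
  rw [mod_succ_eq hj] at e1
  rw [mod_succ_eq hi] at e2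
  have hij' : i.1 ≠ j.1 := fun h => hij (Fin.ext h)
  split_ifs at e1 e2 <;> omega

/-! ### The local factors of `H_C` -/

noncomputable def fA (N : ℕ) (i : Fin N) : Fin (N + 1) → Matrix (Fin 2) (Fin 2) ℂ :=
  fun k => (if k = 0 then σy else 1) * (if k = per i then σx else 1)
noncomputable def fB (N : ℕ) (i : Fin N) : Fin (N + 1) → Matrix (Fin 2) (Fin 2) ℂ :=
  fun k => (if k = per i then σz else 1) * (if k = perS i then σz else 1)

lemma HC_eq (N : ℕ) : HC N = ∑ i : Fin N, (prodOp (fA N i) + prodOp (fB N i)) := by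
  rw [HC, ← Finset.sum_add_distrib]
  apply Finset.sum_congr rfl
  intro i _
  rw [siteOp_eq, siteOp_eq, prodOp_mul, siteOp_eq, siteOp_eq, prodOp_mul]
  rfl

section main
variable {N : ℕ} (hN : 3 ≤ N)

include hN

lemma hA0 (i : Fin N) : ∏ k, ew N k (fA N i k) = 0 := by
  apply Finset.prod_eq_zero (Finset.mem_univ (0 : Fin (N + 1)))
  have h : (0 : Fin (N + 1)) ≠ per i := (per_ne_zero i).symm
  simp [fA, h, ew_sy0]

lemma hB0 (i : Fin N) : ∏ k, ew N k (fB N i k) = 0 := by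
  apply Finset.prod_eq_zero (Finset.mem_univ (per i))
  have h : per i ≠ perS i := per_ne_perS hN i
  simp [fB, h, ew_sz (per_ne_zero i)]

lemma hAA (i j : Fin N) : ∏ k, ew N k (fA N i k * fA N j k) = 1 := by
  apply Finset.prod_eq_one
  intro k _
  by_cases h0 : k = 0
  · subst h0
    have hi : ¬(0 : Fin (N + 1)) = per i := (per_ne_zero i).symm
    have hj : ¬(0 : Fin (N + 1)) = per j := (per_ne_zero j).symm
    simp only [fA, if_true, if_neg hi, if_neg hj, mul_one]
    rw [sy_mul_sy, ew_one]
  · simp only [fA]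
    rw [if_neg h0, one_mul, one_mul]
    by_cases hi : k = per i <;> by_cases hj : k = per j
    · rw [if_pos hi, if_pos hj, sx_mul_sx, ew_one]
    · rw [if_pos hi, if_neg hj, mul_one, ew_sx h0]
    · rw [if_neg hi, if_pos hj, one_mul, ew_sx h0]
    · rw [if_neg hi, if_neg hj, one_mul, ew_one]

lemma hAB (i j : Fin N) : ∏ k, ew N k (fA N i k * fB N j k) = 0 := by
  apply Finset.prod_eq_zero (Finset.mem_univ (0 : Fin (N + 1)))
  have hi : (0 : Fin (N + 1)) ≠ per i := (per_ne_zero i).symm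
  have hj : (0 : Fin (N + 1)) ≠ per j := (per_ne_zero j).symm
  have hjs : (0 : Fin (N + 1)) ≠ perS j := (perS_ne_zero j).symm
  simp [fA, fB, hi, hj, hjs, ew_sy0]

lemma hBA (i j : Fin N) : ∏ k, ew N k (fB N i k * fA N j k) = 0 := by
  apply Finset.prod_eq_zero (Finset.mem_univ (0 : Fin (N + 1)))
  have hi : (0 : Fin (N + 1)) ≠ per i := (per_ne_zero i).symm
  have his : (0 : Fin (N + 1)) ≠ perS i := (perS_ne_zero i).symm
  have hj : (0 : Fin (N + 1)) ≠ per j := (per_ne_zero j).symm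
  simp [fA, fB, hi, his, hj, ew_sy0]

lemma hBB (i j : Fin N) :
    ∏ k, ew N k (fB N i k * fB N j k) = if i = j then 1 else 0 := by
  by_cases hij : i = j
  · subst hij
    rw [if_pos rfl]
    apply Finset.prod_eq_one
    intro k _
    simp only [fB]
    by_cases hpi : k = per i <;> by_cases hps : k = perS i
    · exact absurd (hpi.symm.trans hps) (per_ne_perS hN i)
    · rw [if_pos hpi, if_neg hps, mul_one, sz_mul_sz, ew_one]
    · rw [if_neg hpi, if_pos hps, one_mul, sz_mul_sz, ew_one]
    · rw [if_neg hpi, if_neg hps, one_mul, mul_one, ew_one]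
  · rw [if_neg hij]
    by_cases hps : per i = perS j
    · apply Finset.prod_eq_zero (Finset.mem_univ (per j))
      have h1 : per j ≠ per i := fun h => hij (per_injective h).symm
      have h2 : per j ≠ perS i := fun h => no_two_cycle hN hij hps h
      have h3 : per j ≠ perS j := per_ne_perS hN j
      simp [fB, h1, h2, h3, ew_sz (per_ne_zero j)]
    · apply Finset.prod_eq_zero (Finset.mem_univ (per i))
      have h1 : per i ≠ per j := fun h => hij (per_injective h)
      have h2 : per i ≠ perS i := per_ne_perS hN i
      simp [fB, h1, h2, hps, ew_sz (per_ne_zero i)]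

end main

/-- In the product state `|+z⟩₀ ⊗ |+x⟩^{⊗N}`, the MCS charger
Hamiltonian has vanishing mean and second moment `N² + N`, so its energy
variance equals `N² + N` and scales quadratically with system size. -/
theorem mcs_charger_variance (N : ℕ) (hN : 3 ≤ N) :
    star (φprod N) ⬝ᵥ ((HC N).mulVec (φprod N)) = 0 ∧
    star (φprod N) ⬝ᵥ (((HC N) * (HC N)).mulVec (φprod N))
      = (N : ℂ) ^ 2 + (N : ℂ) := by
  constructor
  · rw [HC_eq, dot_sum]
    apply Finset.sum_eq_zero
    intro i _
    rw [Matrix.add_mulVec, dotProduct_add, expect_prodOp, expect_prodOp,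
      hA0 hN i, hB0 hN i, add_zero]
  · have hexp : (HC N) * (HC N) = ∑ i : Fin N, ∑ j : Fin N,
        (prodOp (fun k => fA N i k * fA N j k) + prodOp (fun k => fA N i k * fB N j k)
          + (prodOp (fun k => fB N i k * fA N j k) + prodOp (fun k => fB N i k * fB N j k))) := by
      rw [HC_eq, Finset.sum_mul_sum]
      apply Finset.sum_congr rfl; intro i _
      apply Finset.sum_congr rfl; intro j _
      rw [add_mul, mul_add, mul_add, prodOp_mul, prodOp_mul, prodOp_mul, prodOp_mul]
    rw [hexp, dot_sum]
    simp_rw [dot_sum, Matrix.add_mulVec, dotProduct_add, expect_prodOp]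
    have : ∀ i j : Fin N,
        (∏ k, ew N k (fA N i k * fA N j k)) + (∏ k, ew N k (fA N i k * fB N j k))
          + ((∏ k, ew N k (fB N i k * fA N j k)) + (∏ k, ew N k (fB N i k * fB N j k)))
        = 1 + (if i = j then 1 else 0) := by
      intro i j
      rw [hAA hN, hAB hN, hBA hN, hBB hN]
      ring
    simp_rw [this]
    simp [Finset.sum_add_distrib, Finset.sum_ite_eq, Finset.card_univ]
    ring
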